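/- Let ⟨x⟩ be a cyclic group of order (q^d − 1)/(q − 1) with d ≥ 3 and q a prime power, and let G = ⟨x⟩ : ⟨δ⟩ with δ of order dividing d acting by x^δ = x^q. If a subgroup K with ⟨x⟩ < K ≤ G and |K : ⟨x⟩| = 2 is cyclic or dihedral, then a contradiction arises; that is, no subgroup K of G containing ⟨x⟩ with index 2 is cyclic or dihedral. -/

import Mathlib

open Subgroup DihedralGroup

private lemma conj_pow_aux {G : Type*} [Group G] (x δ : G) (q : ℕ)
    (hconj : δ * x * δ⁻¹ = x ^ q) : ∀ j : ℕ, δ ^ j * x * (δ ^ j)⁻¹ = x ^ q ^ j := by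
  intro j
  induction j with
  | zero => simp
  | succ j ih =>
    have h1 : δ ^ (j + 1) * x * (δ ^ (j + 1))⁻¹ = δ * (δ ^ j * x * (δ ^ j)⁻¹) * δ⁻¹ := by
      group
    rw [h1, ih, ← conj_pow, hconj, ← pow_mul, ← pow_succ']

private lemma r_pow_aux {n : ℕ} (i : ZMod n) (c : ℕ) :
    (DihedralGroup.r i) ^ c = DihedralGroup.r ((c : ZMod n) * i) := by
  induction c with
  | zero => simp
  | succ c ih =>
    rw [pow_succ, ih, DihedralGroup.r_mul_r]
    push_cast
    ring_nf

/-- Let `n = (q^d - 1)/(q - 1) = q^{d-1} + ⋯ + q + 1` with `q ≥ 2` a prime power and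
`d ≥ 3`, and let `G = ⟨x⟩ : ⟨δ⟩` where `x` has order `n`, `δ` has order dividing `d`,
`δ` acts by `x^δ = x^q`, and `|G| = n·|⟨δ⟩|`. Then no subgroup `K` of `G` containing
`⟨x⟩` with index `|K : ⟨x⟩| = 2` is cyclic or dihedral. -/
theorem stmt14 (q d : ℕ) (hq : 2 ≤ q) (hd : 3 ≤ d) (n : ℕ)
    (hn : n = ∑ j ∈ Finset.range d, q ^ j)
    {G : Type*} [Group G] [Finite G] (x δ : G)
    (hx : orderOf x = n) (hδ : orderOf δ ∣ d)
    (hconj : δ * x * δ⁻¹ = x ^ q)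
    (hgen : Subgroup.closure {x, δ} = ⊤)
    (hcardG : Nat.card G = n * orderOf δ)
    (K : Subgroup G) (hxK : Subgroup.zpowers x ≤ K)
    (hind : Nat.card K = 2 * n) :
    ¬ (IsCyclic K ∨ Nonempty (K ≃* DihedralGroup n)) := by
  -- basic numerics
  have hbig : 1 + q + q ^ (d - 1) ≤ n := by
    have hsub : ({0, 1, d - 1} : Finset ℕ) ⊆ Finset.range d := by
      intro j hj
      simp only [Finset.mem_insert, Finset.mem_singleton] at hj
      simp only [Finset.mem_range]
      omega
    have := Finset.sum_le_sum_of_subset (f := fun j => q ^ j) hsub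
    rw [show ({0, 1, d - 1} : Finset ℕ) = insert 0 (insert 1 {d - 1}) from rfl,
      Finset.sum_insert (by simp; omega), Finset.sum_insert (by simp; omega),
      Finset.sum_singleton] at this
    simp only [pow_zero, pow_one, ← hn] at this
    omega
  have hq4 : 4 ≤ q ^ (d - 1) := by
    calc (4:ℕ) = 2 ^ 2 := rfl
    _ ≤ 2 ^ (d - 1) := Nat.pow_le_pow_right (by norm_num) (by omega)
    _ ≤ q ^ (d - 1) := Nat.pow_le_pow_left hq _
  have hn7 : 7 ≤ n := by omega
  have hqj : ∀ j < d, q ^ j + 1 < n := by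
    intro j hj
    have : q ^ j ≤ q ^ (d - 1) := Nat.pow_le_pow_right (by omega) (by omega)
    omega
  -- normality of N = zpowers x
  set N := Subgroup.zpowers x with hN
  have hNnormal : N.Normal := by
    rw [← Subgroup.normalizer_eq_top_iff, eq_top_iff, ← hgen, Subgroup.closure_le]
    rintro g (rfl | rfl)
    · exact Subgroup.le_normalizer (Subgroup.mem_zpowers g)
    · apply Subgroup.mem_normalizer_fintype
      rintro y hy
      obtain ⟨m, rfl⟩ := hy
      refine ⟨q * m, ?_⟩
      rw [← conj_zpow, hconj]
      rw [← zpow_natCast, ← zpow_mul]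
  -- decomposition of elements
  have htop : N ⊔ Subgroup.zpowers δ = ⊤ := by
    rw [eq_top_iff, ← hgen, Subgroup.closure_le]
    rintro g (rfl | rfl)
    · exact Subgroup.mem_sup_left (Subgroup.mem_zpowers g)
    · exact Subgroup.mem_sup_right (Subgroup.mem_zpowers g)
  have he_pos : 0 < orderOf δ := orderOf_pos δ
  have he_le : orderOf δ ≤ d := Nat.le_of_dvd (by omega) hδ
  have hdec : ∀ g : G, ∃ (a : ℤ) (j : ℕ), j < d ∧ g = x ^ a * δ ^ j := by
    intro g
    have hg : g ∈ ((N ⊔ Subgroup.zpowers δ : Subgroup G) : Set G) := by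
      rw [htop]; trivial
    rw [Subgroup.normal_mul] at hg
    obtain ⟨u, hu, v, hv, rfl⟩ := hg
    obtain ⟨a, rfl⟩ := hu
    obtain ⟨m, rfl⟩ := hv
    set e : ℤ := (orderOf δ : ℤ) with he
    have he0 : e ≠ 0 := by simp only [he]; omega
    refine ⟨a, (m % e).toNat, ?_, ?_⟩
    · have h1 : m % e < e := Int.emod_lt_of_pos m (by simp only [he]; omega)
      have h2 : 0 ≤ m % e := Int.emod_nonneg m he0
      omega
    · congr 1
      have h2 : 0 ≤ m % e := Int.emod_nonneg m he0
      rw [← zpow_natCast, Int.toNat_of_nonneg h2]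
      calc δ ^ m = δ ^ (e * (m / e) + m % e) := by rw [Int.mul_ediv_add_emod]
        _ = δ ^ (m % e) := by
          rw [zpow_add, zpow_mul, he, zpow_natCast, pow_orderOf_eq_one, one_zpow, one_mul]
  -- pick k ∈ K \ N
  have hKN : ¬(K ≤ N) := by
    intro h
    have := Subgroup.card_le_of_le h
    rw [hind, Nat.card_zpowers, hx] at this
    omega
  obtain ⟨k, hkK, hkN⟩ := SetLike.not_le_iff_exists.mp hKN
  obtain ⟨a, j, hjd, hkeq⟩ := hdec k
  -- conjugation formula
  have hconjk : k * x * k⁻¹ = x ^ q ^ j := by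
    rw [hkeq, mul_inv_rev]
    have h1 : x ^ a * δ ^ j * x * ((δ ^ j)⁻¹ * (x ^ a)⁻¹)
        = x ^ a * (δ ^ j * x * (δ ^ j)⁻¹) * (x ^ a)⁻¹ := by group
    rw [h1, conj_pow_aux x δ q hconj j]
    have hc : Commute (x ^ a) (x ^ q ^ j) := ((Commute.refl x).zpow_left a).pow_right _
    rw [hc.eq, mul_inv_cancel_right]
  -- subgroup elements
  set x' : K := ⟨x, hxK (Subgroup.mem_zpowers x)⟩ with hx'def
  set k' : K := ⟨k, hkK⟩ with hk'def
  -- the two fatal conclusions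
  have case1 : k * x * k⁻¹ = x → False := by
    intro h
    have hmod : q ^ j ≡ 1 [MOD n] := by
      have : x ^ q ^ j = x ^ 1 := by rw [pow_one, ← hconjk]; exact h
      rw [pow_eq_pow_iff_modEq, hx] at this
      exact this
    have hlt : q ^ j < n := by have := hqj j hjd; omega
    have h1 : q ^ j % n = 1 % n := hmod
    rw [Nat.mod_eq_of_lt hlt, Nat.mod_eq_of_lt (by omega)] at h1
    have hj0 : j = 0 := by
      by_contra hj
      have := Nat.one_lt_pow hj (show 1 < q by omega)
      omega
    apply hkN
    rw [hkeq, hj0, pow_zero, mul_one]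
    exact Subgroup.zpow_mem _ (Subgroup.mem_zpowers x) a
  have case2 : k * x * k⁻¹ = x⁻¹ → False := by
    intro h
    have hxx : x ^ q ^ j = x⁻¹ := by rw [← hconjk]; exact h
    have hpow : x ^ (q ^ j + 1) = 1 := by
      rw [pow_succ, hxx, inv_mul_cancel]
    have := orderOf_dvd_of_pow_eq_one hpow
    rw [hx] at this
    have := Nat.le_of_dvd (by omega) this
    have := hqj j hjd
    omega
  rintro (hcyc | hψne)
  · -- cyclic case
    obtain ⟨g, hg⟩ := hcyc.exists_generator
    obtain ⟨a1, ha1⟩ := Subgroup.mem_zpowers_iff.mp (hg x')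
    obtain ⟨b1, hb1⟩ := Subgroup.mem_zpowers_iff.mp (hg k')
    have hcomm : k' * x' = x' * k' := by rw [← ha1, ← hb1, zpow_mul_comm]
    have hcommG : k * x = x * k := congrArg Subtype.val hcomm
    apply case1
    rw [hcommG, mul_inv_cancel_right]
  · -- dihedral case
    obtain ⟨ψ⟩ := hψne
    haveI : NeZero n := ⟨by omega⟩
    have hx' : orderOf x' = n := by
      rw [← hx]
      exact (orderOf_injective K.subtype K.subtype_injective x').symm
    have hψx : orderOf (ψ x') = n := by
      rw [show orderOf (ψ x') = orderOf x' from orderOf_injective ψ.toMonoidHom ψ.injective x', hx']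
    rcases hψ : ψ x' with i | i
    swap
    · rw [hψ, DihedralGroup.orderOf_sr] at hψx
      omega
    · have hcop : Nat.gcd n i.val = 1 := by
        rw [hψ, DihedralGroup.orderOf_r] at hψx
        by_contra hne
        have hpos : 0 < Nat.gcd n i.val := Nat.gcd_pos_of_pos_left _ (by omega)
        have := Nat.div_lt_self (show 0 < n by omega) (show 1 < Nat.gcd n i.val by omega)
        omega
      have hunit : IsUnit i := by
        have := (ZMod.isUnit_iff_coprime i.val n).mpr (Nat.coprime_comm.mp hcop)
        rwa [ZMod.natCast_rightInverse i] at this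
      rcases hψk : ψ k' with m | m
      · -- rotation: k ∈ N, contradiction
        obtain ⟨u, hu⟩ := hunit
        set c : ZMod n := m * ↑u⁻¹ with hc
        have hci : c * i = m := by
          rw [hc, mul_assoc, ← hu, Units.inv_mul, mul_one]
        have hr : (DihedralGroup.r i) ^ c.val = DihedralGroup.r m := by
          rw [r_pow_aux, ZMod.natCast_rightInverse c, hci]
        have : ψ k' = ψ (x' ^ c.val) := by
          rw [map_pow, hψ, hr, hψk]
        have hk'x : k' = x' ^ c.val := ψ.injective this
        apply hkN
        have : k = x ^ c.val := by
          have := congrArg Subtype.val hk'x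
          simpa using this
        rw [this]
        exact Subgroup.pow_mem _ (Subgroup.mem_zpowers x) _
      · -- reflection case
        apply case2
        have hinvK : ψ (k' * x' * k'⁻¹) = ψ x'⁻¹ := by
          rw [map_mul, map_mul, map_inv, map_inv, hψ, hψk]
          rw [show (DihedralGroup.sr m)⁻¹ = DihedralGroup.sr m from rfl,
            DihedralGroup.sr_mul_r, DihedralGroup.sr_mul_sr]
          rw [show (DihedralGroup.r i)⁻¹ = DihedralGroup.r (-i) from rfl]
          congr 1
          ring
        have := ψ.injective hinvK
        have := congrArg Subtype.val this
        simpa using this
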